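/- arXiv:2207.00640 — 2 statements merged into one kernel-verified Lean document; each statement's English description precedes it below -/
import Mathlib

section
/- Let X be a separable Banach space, μ a Borel probability measure on X assigning positive mass to every open ball, and let Φ and the posterior μ^y satisfy Assumption (Φ). Then for any asymptotic maximizing family (ζ^δ)_{δ>0} in X for μ^y there exist constants K > 0 and δ₀ > 0 such that for every 0 < δ < δ₀ one has μ(B_δ(ζ^δ)) ≥ K · μ(B_δ(0)). -/
open MeasureTheory Filter Metric Set
open scoped ENNReal Topology

noncomputable section

/-- `ζ` (indexed by the radius `δ > 0`) is an asymptotic maximizing family (AMF) for `ν`. -/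
def IsAMF {X : Type*} [NormedAddCommGroup X] [MeasurableSpace X]
    (ν : Measure X) (ζ : ℝ → X) : Prop :=
  ∃ ε : ℝ → ℝ, (∀ δ > (0 : ℝ), ε δ ∈ Set.Ioo (0 : ℝ) 1) ∧
    Tendsto ε (𝓝[>] (0 : ℝ)) (𝓝 0) ∧
    ∀ δ > (0 : ℝ), ENNReal.ofReal (1 - ε δ) * (⨆ z : X, ν (ball z δ)) < ν (ball (ζ δ) δ)

/-- The posterior measure `μ^y(A) = Z⁻¹ ∫_A exp(-Φ u) dμ(u)`, `Z = ∫ exp(-Φ u) dμ(u)`. -/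
def posterior {X : Type*} [MeasurableSpace X] (μ : Measure X) (Φ : X → ℝ) : Measure X :=
  (ENNReal.ofReal (∫ u, Real.exp (-Φ u) ∂μ))⁻¹ •
    μ.withDensity fun u => ENNReal.ofReal (Real.exp (-Φ u))

/-- For any AMF `ζ` for the posterior `μ^y`, there are `K > 0` and `δ₀ > 0` with
`μ(B_δ(ζ^δ)) ≥ K · μ(B_δ(0))` for all `0 < δ < δ₀`. -/
theorem amf_prior_ball_lower_bound {X : Type*} [NormedAddCommGroup X] [NormedSpace ℝ X]
    [CompleteSpace X] [TopologicalSpace.SeparableSpace X]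
    [MeasurableSpace X] [BorelSpace X]
    (μ : Measure X) [IsProbabilityMeasure μ]
    (hball : ∀ (x : X) (δ : ℝ), 0 < δ → 0 < μ (ball x δ))
    (Φ : X → ℝ) (hΦmeas : Measurable Φ)
    (hbdd : ∃ M : ℝ, ∀ u : X, M ≤ Φ u)
    (hloc : ∀ r > (0 : ℝ), ∃ K > (0 : ℝ), ∀ u : X, ‖u‖ < r → Φ u ≤ K)
    (hlip : ∀ r > (0 : ℝ), ∃ L > (0 : ℝ), ∀ u₁ u₂ : X, ‖u₁‖ ≤ r → ‖u₂‖ ≤ r →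
      |Φ u₁ - Φ u₂| ≤ L * ‖u₁ - u₂‖)
    (hΦ0 : Φ 0 = 0)
    (ζ : ℝ → X) (hζ : IsAMF (posterior μ Φ) ζ) :
    ∃ K : ℝ≥0∞, 0 < K ∧ ∃ δ₀ > (0 : ℝ), ∀ δ : ℝ, 0 < δ → δ < δ₀ →
      K * μ (ball 0 δ) ≤ μ (ball (ζ δ) δ) := by
  obtain ⟨M, hM⟩ := hbdd
  obtain ⟨K1, hK1pos, hK1⟩ := hloc 1 one_pos
  obtain ⟨ε, hε01, hεt, hAMF⟩ := hζ
  set f : X → ℝ≥0∞ := fun u => ENNReal.ofReal (Real.exp (-Φ u)) with hf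
  have hfmeas : Measurable f := (Real.measurable_exp.comp hΦmeas.neg).ennreal_ofReal
  have hint : Integrable (fun u => Real.exp (-Φ u)) μ := by
    refine Integrable.mono' (integrable_const (Real.exp (-M)))
      (Real.measurable_exp.comp hΦmeas.neg).aestronglyMeasurable (ae_of_all _ fun u => ?_)
    rw [Real.norm_eq_abs, abs_of_pos (Real.exp_pos _)]
    exact Real.exp_le_exp.2 (neg_le_neg (hM u))
  set Z : ℝ≥0∞ := ENNReal.ofReal (∫ u, Real.exp (-Φ u) ∂μ) with hZ
  have hZeq : Z = ∫⁻ u, f u ∂μ :=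
    MeasureTheory.ofReal_integral_eq_lintegral_ofReal hint
      (ae_of_all _ fun u => (Real.exp_pos _).le)
  have hupper : ∀ A : Set X, ∫⁻ u in A, f u ∂μ ≤ ENNReal.ofReal (Real.exp (-M)) * μ A := by
    intro A
    calc ∫⁻ u in A, f u ∂μ ≤ ∫⁻ _ in A, ENNReal.ofReal (Real.exp (-M)) ∂μ :=
          lintegral_mono fun u =>
            ENNReal.ofReal_le_ofReal (Real.exp_le_exp.2 (neg_le_neg (hM u)))
      _ = ENNReal.ofReal (Real.exp (-M)) * μ A := by rw [setLIntegral_const]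
  have hlower : ∀ A : Set X, A ⊆ ball (0:X) 1 →
      ENNReal.ofReal (Real.exp (-K1)) * μ A ≤ ∫⁻ u in A, f u ∂μ := by
    intro A hA
    rw [← setLIntegral_const]
    refine setLIntegral_mono hfmeas fun u hu => ?_
    refine ENNReal.ofReal_le_ofReal (Real.exp_le_exp.2 (neg_le_neg (hK1 u ?_)))
    simpa [mem_ball, dist_eq_norm] using hA hu
  have hZ0 : Z ≠ 0 := by
    rw [hZeq]
    intro h0
    have h1 : ENNReal.ofReal (Real.exp (-K1)) * μ (ball (0:X) 1) ≤ ∫⁻ u, f u ∂μ :=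
      (hlower (ball 0 1) subset_rfl).trans (setLIntegral_le_lintegral _ _)
    rw [h0, nonpos_iff_eq_zero, mul_eq_zero] at h1
    rcases h1 with h1 | h1
    · exact absurd h1 (by simp [ENNReal.ofReal_eq_zero, not_le, Real.exp_pos])
    · exact absurd h1 (hball 0 1 one_pos).ne'
  have hZtop : Z ≠ ⊤ := ENNReal.ofReal_ne_top
  have hνapp : ∀ A : Set X, MeasurableSet A →
      posterior μ Φ A = Z⁻¹ * ∫⁻ u in A, f u ∂μ := by
    intro A hAm
    rw [posterior, Measure.smul_apply, withDensity_apply _ hAm, smul_eq_mul]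
  -- choose δ₀
  have hev : ∀ᶠ δ in 𝓝[>] (0:ℝ), ε δ < 1/2 :=
    hεt.eventually (Filter.Tendsto.eventually_lt_const (by norm_num) tendsto_id)
  rw [eventually_nhdsWithin_iff, Metric.eventually_nhds_iff] at hev
  obtain ⟨η, hηpos, hη⟩ := hev
  refine ⟨ENNReal.ofReal (2⁻¹ * Real.exp (-K1) * Real.exp M), ?_, min η 1, ?_, ?_⟩
  · exact ENNReal.ofReal_pos.2 (by positivity)
  · exact lt_min hηpos one_pos
  intro δ hδ hδlt
  have hδη : δ < η := hδlt.trans_le (min_le_left _ _)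
  have hδ1 : δ ≤ 1 := (hδlt.trans_le (min_le_right _ _)).le
  have hεδ : ε δ < 1/2 := hη (by simpa [Real.dist_eq, abs_of_pos hδ] using hδη) hδ
  set ν := posterior μ Φ with hν
  have hchain : ENNReal.ofReal 2⁻¹ * ν (ball (0:X) δ) ≤ ν (ball (ζ δ) δ) := by
    calc ENNReal.ofReal 2⁻¹ * ν (ball (0:X) δ)
        ≤ ENNReal.ofReal (1 - ε δ) * ν (ball (0:X) δ) :=
          mul_le_mul_left (ENNReal.ofReal_le_ofReal (by linarith)) _
      _ ≤ ENNReal.ofReal (1 - ε δ) * ⨆ z : X, ν (ball z δ) :=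
          mul_le_mul_right (le_iSup (fun z : X => ν (ball z δ)) 0) _
      _ ≤ ν (ball (ζ δ) δ) := (hAMF δ hδ).le
  have hb0 : Z⁻¹ * (ENNReal.ofReal (Real.exp (-K1)) * μ (ball (0:X) δ)) ≤ ν (ball (0:X) δ) := by
    rw [hν, hνapp _ measurableSet_ball]
    exact mul_le_mul_right (hlower _ (ball_subset_ball hδ1)) _
  have hbz : ν (ball (ζ δ) δ) ≤ Z⁻¹ * (ENNReal.ofReal (Real.exp (-M)) * μ (ball (ζ δ) δ)) := by
    rw [hν, hνapp _ measurableSet_ball]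
    exact mul_le_mul_right (hupper _) _
  have hkey : Z⁻¹ * (ENNReal.ofReal 2⁻¹ * (ENNReal.ofReal (Real.exp (-K1)) * μ (ball (0:X) δ)))
      ≤ Z⁻¹ * (ENNReal.ofReal (Real.exp (-M)) * μ (ball (ζ δ) δ)) := by
    calc Z⁻¹ * (ENNReal.ofReal 2⁻¹ * (ENNReal.ofReal (Real.exp (-K1)) * μ (ball (0:X) δ)))
        = ENNReal.ofReal 2⁻¹ * (Z⁻¹ * (ENNReal.ofReal (Real.exp (-K1)) * μ (ball (0:X) δ))) := by
          ring
      _ ≤ ENNReal.ofReal 2⁻¹ * ν (ball (0:X) δ) := mul_le_mul_right hb0 _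
      _ ≤ ν (ball (ζ δ) δ) := hchain
      _ ≤ _ := hbz
  have hcancel : ENNReal.ofReal 2⁻¹ * (ENNReal.ofReal (Real.exp (-K1)) * μ (ball (0:X) δ))
      ≤ ENNReal.ofReal (Real.exp (-M)) * μ (ball (ζ δ) δ) :=
    (ENNReal.mul_le_mul_iff_right (by simp [hZ0, hZtop]) (by simp [hZ0])).1 hkey
  have hexp : ENNReal.ofReal (Real.exp (-M)) *
      (ENNReal.ofReal (2⁻¹ * Real.exp (-K1) * Real.exp M) * μ (ball (0:X) δ))
      = ENNReal.ofReal 2⁻¹ * (ENNReal.ofReal (Real.exp (-K1)) * μ (ball (0:X) δ)) := by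
    rw [← mul_assoc, ← ENNReal.ofReal_mul (Real.exp_pos _).le, ← mul_assoc,
      show Real.exp (-M) * (2⁻¹ * Real.exp (-K1)) * Real.exp M = 2⁻¹ * Real.exp (-K1) by
        rw [show Real.exp (-M) * (2⁻¹ * Real.exp (-K1)) * Real.exp M
            = 2⁻¹ * Real.exp (-K1) * (Real.exp (-M) * Real.exp M) by ring, ← Real.exp_add]
        simp,
      ENNReal.ofReal_mul (by norm_num : (0:ℝ) ≤ 2⁻¹), mul_assoc]
  refine (ENNReal.mul_le_mul_iff_right (a := ENNReal.ofReal (Real.exp (-M)))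
    (by simp [ENNReal.ofReal_eq_zero, not_le, Real.exp_pos]) ENNReal.ofReal_ne_top).1 ?_
  rw [hexp]
  exact hcancel.trans_eq rfl
end
end

section
/- Let 1 ≤ p < ∞, α = min(p,2), k ∈ ℕ, γ > 0, and ρ ∈ ℝ^k with ρ₁ ≥ ρ₂ ≥ ⋯ ≥ ρ_k > 0. Define L_{ρ,γ} : ℝ^k → ℝ by L_{ρ,γ}(x) = ∑_{j=1}^k ( (γ²ρ_j² + x_j²)^{p/2} − (γρ_j)^p ) if 1 ≤ p ≤ 2, and L_{ρ,γ}(x) = ‖x‖_p² if 2 < p < ∞. Then for every x ∈ ℝ^k, ‖x‖_p^α − γ^α ‖ρ‖_p^α ≤ L_{ρ,γ}(x) ≤ ‖x‖_p^α. -/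
open Real Set

noncomputable section

/-- The `ℓᵖ` norm on `ℝᵏ`. -/
def pnormFin {k : ℕ} (p : ℝ) (x : Fin k → ℝ) : ℝ := (∑ j, |x j| ^ p) ^ (1 / p)

/-- The function `L_{ρ,γ}` of the convexification result. -/
def Lfun {k : ℕ} (p γ : ℝ) (ρ : Fin k → ℝ) (x : Fin k → ℝ) : ℝ :=
  if p ≤ 2 then ∑ j, ((γ ^ 2 * ρ j ^ 2 + x j ^ 2) ^ (p / 2) - (γ * ρ j) ^ p)
  else pnormFin p x ^ 2

lemma real_rpow_add_le_add_rpow {a b q : ℝ} (ha : 0 ≤ a) (hb : 0 ≤ b) (hq : 0 ≤ q)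
    (hq1 : q ≤ 1) : (a + b) ^ q ≤ a ^ q + b ^ q := by
  lift a to NNReal using ha
  lift b to NNReal using hb
  exact_mod_cast NNReal.rpow_add_le_add_rpow a b hq hq1

lemma pnormFin_rpow {k : ℕ} {p : ℝ} (hp : 0 < p) (x : Fin k → ℝ) :
    pnormFin p x ^ p = ∑ j, |x j| ^ p := by
  have hs : 0 ≤ ∑ j, |x j| ^ p :=
    Finset.sum_nonneg fun j _ => Real.rpow_nonneg (abs_nonneg _) _
  rw [pnormFin, ← Real.rpow_mul hs, one_div, inv_mul_cancel₀ hp.ne', Real.rpow_one]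

lemma sq_rpow_half (a p : ℝ) : (a ^ 2) ^ (p / 2) = |a| ^ p := by
  rw [← sq_abs, ← Real.rpow_natCast |a| 2, ← Real.rpow_mul (abs_nonneg _)]
  congr 1
  ring

/-- With `α = min(p,2)`: `‖x‖_p^α − γ^α ‖ρ‖_p^α ≤ L_{ρ,γ}(x) ≤ ‖x‖_p^α` for all `x ∈ ℝᵏ`. -/
theorem Lfun_bounds (p : ℝ) (hp : 1 ≤ p) (k : ℕ) (hk : 0 < k)
    (γ : ℝ) (hγ : 0 < γ) (ρ : Fin k → ℝ) (hρpos : ∀ j, 0 < ρ j) (hρanti : Antitone ρ)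
    (x : Fin k → ℝ) :
    pnormFin p x ^ min p 2 - γ ^ min p 2 * pnormFin p ρ ^ min p 2 ≤ Lfun p γ ρ x ∧
      Lfun p γ ρ x ≤ pnormFin p x ^ min p 2 := by
  have hp0 : 0 < p := lt_of_lt_of_le one_pos hp
  by_cases hple : p ≤ 2
  · have hmin : min p 2 = p := min_eq_left hple
    rw [hmin, Lfun, if_pos hple]
    have hq0 : (0:ℝ) ≤ p / 2 := by positivity
    have hq1 : p / 2 ≤ 1 := by linarith
    have hxp : pnormFin p x ^ p = ∑ j, |x j| ^ p := pnormFin_rpow hp0 x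
    have hρterm : ∀ j, (γ ^ 2 * ρ j ^ 2) ^ (p / 2) = (γ * ρ j) ^ p := by
      intro j
      rw [← mul_pow, sq_rpow_half, abs_of_pos (mul_pos hγ (hρpos j))]
    have hγρ : γ ^ p * pnormFin p ρ ^ p = ∑ j, (γ * ρ j) ^ p := by
      rw [pnormFin_rpow hp0, Finset.mul_sum]
      refine Finset.sum_congr rfl fun j _ => ?_
      rw [← Real.mul_rpow hγ.le (abs_nonneg _), abs_of_pos (hρpos j)]
    constructor
    · rw [hxp, hγρ, ← Finset.sum_sub_distrib]
      refine Finset.sum_le_sum fun j _ => ?_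
      rw [← sq_rpow_half (x j) p, ← hρterm j] at *
      have := Real.rpow_le_rpow (sq_nonneg (x j))
        (le_add_of_nonneg_left (by positivity : (0:ℝ) ≤ γ ^ 2 * ρ j ^ 2)) hq0
      linarith
    · rw [hxp]
      refine Finset.sum_le_sum fun j _ => ?_
      rw [← sq_rpow_half (x j) p, ← hρterm j]
      have := real_rpow_add_le_add_rpow (by positivity : (0:ℝ) ≤ γ ^ 2 * ρ j ^ 2)
        (sq_nonneg (x j)) hq0 hq1
      linarith
  · have hmin : min p 2 = 2 := min_eq_right (le_of_not_ge hple)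
    rw [hmin, Lfun, if_neg hple]
    rw [show (2:ℝ) = ((2:ℕ):ℝ) by norm_num, Real.rpow_natCast, Real.rpow_natCast,
      Real.rpow_natCast]
    exact ⟨sub_le_self _ (by positivity), le_rfl⟩
end
end
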